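/- For every i ∈ {1,…,n}, the monomial x_i^{c_i} is an indispensable monomial of I_A, i.e., every set of binomials generating I_A contains a binomial one of whose monomials is x_i^{c_i}. -/

import Mathlib

open MvPolynomial Finsupp

variable (K : Type*) [Field K]

/-- The `A`-degree of an exponent vector `u ∈ ℕ^n` with respect to `a_1, …, a_n ∈ ℕ`, namely
`∑ i, u i * a i`. -/
def degN {n : ℕ} (a : Fin n → ℕ) (u : Fin n →₀ ℕ) : ℕ :=
  ∑ i, u i * a i

/-- The defining ideal `I_A` of the monomial curve `x_i = t^{a_i}`: the ideal generated by all
binomials `x^u - x^v` with `∑ u_i a_i = ∑ v_i a_i` (equivalently, the kernel of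
`k[x_1,…,x_n] → k[t]`, `x_i ↦ t^{a_i}`). -/
noncomputable def curveIdeal {n : ℕ} (a : Fin n → ℕ) : Ideal (MvPolynomial (Fin n) K) :=
  Ideal.span { f | ∃ u v : Fin n →₀ ℕ, degN a u = degN a v ∧
    f = monomial u (1 : K) - monomial v (1 : K) }

/-- `c` is the critical exponent of the variable `x_i`: the least positive integer `c` with
`c * a_i ∈ ∑_{j ≠ i} ℕ a_j`. -/
def IsCritExp {n : ℕ} (a : Fin n → ℕ) (i : Fin n) (c : ℕ) : Prop :=
  IsLeast { m : ℕ | 0 < m ∧ ∃ u : Fin n →₀ ℕ, u i = 0 ∧ m * a i = degN a u } c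

/-- `f` is a critical binomial of `I_A` with respect to `x_i` (where `c` is the vector of
critical exponents): `f = x_i^{c_i} - ∏_{j ≠ i} x_j^{u_{ij}} ∈ I_A`. -/
def IsCritBinom {n : ℕ} (a c : Fin n → ℕ) (i : Fin n) (f : MvPolynomial (Fin n) K) : Prop :=
  ∃ u : Fin n →₀ ℕ, u i = 0 ∧
    f = monomial (Finsupp.single i (c i)) (1 : K) - monomial u (1 : K) ∧
    f ∈ curveIdeal K a

/-- The critical ideal `C_A`: the ideal generated by all critical binomials of `I_A`. -/
noncomputable def criticalIdeal {n : ℕ} (a c : Fin n → ℕ) :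
    Ideal (MvPolynomial (Fin n) K) :=
  Ideal.span { f | ∃ i : Fin n, IsCritBinom K a c i f }

/-- `S` is a set of binomials generating `J`. -/
def IsBinomGenSet {σ : Type*} (J : Ideal (MvPolynomial σ K)) (S : Set (MvPolynomial σ K)) :
    Prop :=
  (∀ f ∈ S, ∃ u v : σ →₀ ℕ, f = monomial u (1 : K) - monomial v (1 : K)) ∧
  Ideal.span S = J

/-- The monomial `x^u` is an indispensable monomial of `J`: every set of binomials generating `J`
contains a binomial one of whose monomials is `x^u`. -/
def IndispMonomial {σ : Type*} (J : Ideal (MvPolynomial σ K)) (u : σ →₀ ℕ) : Prop :=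
  ∀ S : Set (MvPolynomial σ K), IsBinomGenSet K J S → ∃ f ∈ S, u ∈ f.support

/-- `f` is an indispensable binomial of `J`: every set of binomials generating `J` contains
`f` or `-f`. -/
def IndispBinomial {σ : Type*} (J : Ideal (MvPolynomial σ K)) (f : MvPolynomial σ K) : Prop :=
  ∀ S : Set (MvPolynomial σ K), IsBinomGenSet K J S → f ∈ S ∨ -f ∈ S

/-- `x^u - x^v` is a primitive binomial of `I_A`: it is a nonzero binomial of `I_A` and there is
no other nonzero binomial `x^{u'} - x^{v'} ∈ I_A` with `x^{u'} ∣ x^u` and `x^{v'} ∣ x^v`. -/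
def IsPrimitive {n : ℕ} (a : Fin n → ℕ) (u v : Fin n →₀ ℕ) : Prop :=
  u ≠ v ∧ (monomial u (1 : K) - monomial v (1 : K)) ∈ curveIdeal K a ∧
  ∀ u' v' : Fin n →₀ ℕ, u' ≤ u → v' ≤ v → u' ≠ v' →
    (monomial u' (1 : K) - monomial v' (1 : K)) ∈ curveIdeal K a → u' = u ∧ v' = v


section Statement8Aux

variable {n : ℕ}

lemma degN_single' (a : Fin n → ℕ) (i : Fin n) (e : ℕ) :
    degN a (Finsupp.single i e) = e * a i := by
  simp [degN, Finsupp.single_apply, Finset.sum_ite_eq']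

lemma degN_eq_zero' {a : Fin n → ℕ} (ha : ∀ i, 0 < a i) {u : Fin n →₀ ℕ}
    (h : degN a u = 0) : u = 0 := by
  ext j
  have h1 := Finset.sum_eq_zero_iff.1 h j (Finset.mem_univ j)
  rcases Nat.mul_eq_zero.1 h1 with h1 | h2
  · simpa using h1
  · exact absurd h2 (ha j).ne'

lemma degN_erase' (a : Fin n → ℕ) (u : Fin n →₀ ℕ) (i : Fin n) :
    degN a u = u i * a i + degN a (u.erase i) := by
  classical
  have h1 : ∀ (v : Fin n →₀ ℕ), degN a v
      = v i * a i + ∑ j ∈ Finset.univ.erase i, v j * a j := fun v => by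
    rw [degN]; exact (Finset.add_sum_erase _ _ (Finset.mem_univ i)).symm
  rw [h1 u, h1 (u.erase i), Finsupp.erase_same, zero_mul, zero_add]
  congr 1
  exact Finset.sum_congr rfl fun j hj => by
    rw [Finsupp.erase_ne (Finset.mem_erase.1 hj).1]

lemma aeval_mon' (a : Fin n → ℕ) (u : Fin n →₀ ℕ) :
    aeval (fun j => (Polynomial.X : Polynomial K) ^ a j) (monomial u (1 : K)) =
      Polynomial.X ^ degN a u := by
  rw [aeval_monomial, map_one, one_mul, Finsupp.prod]
  have h : ∀ j ∈ u.support,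
      ((Polynomial.X : Polynomial K) ^ a j) ^ u j = Polynomial.X ^ (u j * a j) :=
    fun j _ => by rw [← pow_mul, mul_comm]
  rw [Finset.prod_congr rfl h, Finset.prod_pow_eq_pow_sum]
  rw [degN]
  congr 1
  exact Finset.sum_subset (Finset.subset_univ _) (fun x _ hx => by
    rw [Finsupp.notMem_support_iff.1 hx, zero_mul])

/-- Binomials in the curve ideal are `A`-homogeneous. -/
lemma degN_eq_of_mem_curveIdeal {a : Fin n → ℕ} {u v : Fin n →₀ ℕ}
    (h : (monomial u (1 : K) - monomial v (1 : K)) ∈ curveIdeal K a) :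
    degN a u = degN a v := by
  set φ := aeval (R := K) (fun j => (Polynomial.X : Polynomial K) ^ a j)
  have hker : curveIdeal K a ≤ RingHom.ker (φ.toRingHom) := by
    rw [curveIdeal, Ideal.span_le]
    rintro f ⟨u', v', hd, rfl⟩
    simp only [SetLike.mem_coe, RingHom.mem_ker, AlgHom.toRingHom_eq_coe,
      RingHom.coe_coe, map_sub]
    rw [aeval_mon', aeval_mon', hd, sub_self]
  have h0 := hker h
  simp only [RingHom.mem_ker, AlgHom.toRingHom_eq_coe, RingHom.coe_coe, map_sub] at h0
  rw [aeval_mon', aeval_mon', sub_eq_zero] at h0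
  have := congrArg Polynomial.natDegree h0
  rwa [Polynomial.natDegree_X_pow, Polynomial.natDegree_X_pow] at this

/-- If a binomial of `I_A` has a monomial dividing `x_i^{c_i}`, that monomial equals
`x_i^{c_i}`. -/
lemma eq_single_of_le {a c : Fin n → ℕ} (ha : ∀ i, 0 < a i) {i : Fin n}
    (hc : IsCritExp a i (c i)) {p q : Fin n →₀ ℕ} (hpq : p ≠ q)
    (hd : degN a p = degN a q) (hle : p ≤ Finsupp.single i (c i)) :
    p = Finsupp.single i (c i) := by
  classical
  have hp : p = Finsupp.single i (p i) := by
    ext j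
    by_cases hj : j = i
    · subst hj; simp
    · have := hle j
      rw [Finsupp.single_apply, if_neg (fun h => hj h.symm)] at this
      rw [Finsupp.single_apply, if_neg (fun h => hj h.symm)]
      omega
  set e := p i with he
  have hec : e ≤ c i := by
    have := hle i; simpa using this
  have hdp : degN a p = e * a i := by rw [hp, degN_single']
  set s := q i with hs
  have hdq : degN a q = s * a i + degN a (q.erase i) := degN_erase' a q i
  rcases le_or_gt e s with hes | hse
  · -- contradiction: p = q
    have hd0 : degN a (q.erase i) = 0 ∧ e = s := by
      have h1 : e * a i = s * a i + degN a (q.erase i) := by rw [← hdp, hd, hdq]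
      have h2 : e * a i ≤ s * a i := Nat.mul_le_mul_right _ hes
      have hai := ha i
      constructor
      · omega
      · nlinarith
    have hq0 : q.erase i = 0 := degN_eq_zero' ha hd0.1
    have : q = Finsupp.single i s := by
      ext j
      by_cases hj : j = i
      · subst hj; simp [hs]
      · have h4 : (q.erase i) j = 0 := by rw [hq0]; rfl
        rw [Finsupp.erase_ne hj] at h4
        rw [Finsupp.single_apply, if_neg (fun h => hj h.symm)]
        exact h4
    exact absurd (by rw [hp, this, hd0.2]) hpq
  · -- s < e: minimality
    have h1 : e * a i = s * a i + degN a (q.erase i) := by rw [← hdp, hd, hdq]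
    have hmem : (e - s) ∈ { m : ℕ | 0 < m ∧ ∃ u : Fin n →₀ ℕ, u i = 0 ∧ m * a i = degN a u } := by
      refine ⟨by omega, q.erase i, Finsupp.erase_same, ?_⟩
      have : (e - s) * a i = e * a i - s * a i := by rw [Nat.sub_mul]
      omega
    have hcle : c i ≤ e - s := hc.2 hmem
    have : e = c i := by omega
    rw [hp, this]

/-- Extracting a generator witnessing a monomial in an ideal element. -/
lemma exists_gen_of_coeff_ne_zero {σ : Type*} [DecidableEq σ] {S : Set (MvPolynomial σ K)}
    {h : MvPolynomial σ K} (hh : h ∈ Ideal.span S) :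
    ∀ w : σ →₀ ℕ, coeff w h ≠ 0 → ∃ g ∈ S, ∃ u' : σ →₀ ℕ, u' ≤ w ∧ u' ∈ g.support := by
  refine Submodule.span_induction ?_ ?_ ?_ ?_ hh
  · intro g hg w hw
    exact ⟨g, hg, w, le_refl w, MvPolynomial.mem_support_iff.2 hw⟩
  · intro w hw; simp at hw
  · intro x y _ _ hx hy w hw
    by_cases h1 : coeff w x ≠ 0
    · exact hx w h1
    · refine hy w ?_
      push_neg at h1
      rw [coeff_add, h1, zero_add] at hw
      exact hw
  · intro r x _ hx w hw
    rw [smul_eq_mul, coeff_mul] at hw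
    obtain ⟨p, hp, hne⟩ := Finset.exists_ne_zero_of_sum_ne_zero hw
    have ht : coeff p.2 x ≠ 0 := fun h0 => hne (by rw [h0, mul_zero])
    have hle : p.2 ≤ w := by
      rw [← Finset.HasAntidiagonal.mem_antidiagonal.1 hp]; exact le_add_self
    obtain ⟨g, hg, u', hu', hmem⟩ := hx p.2 ht
    exact ⟨g, hg, u', le_trans hu' hle, hmem⟩

end Statement8Aux

/-- For every `i`, the monomial `x_i^{c_i}` is an indispensable monomial of
`I_A`. -/
theorem statement8 {n : ℕ} (a c : Fin n → ℕ) (ha : ∀ i, 0 < a i)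
    (hgcd : Finset.univ.gcd a = 1) (hc : ∀ i, IsCritExp a i (c i)) (i : Fin n) :
    IndispMonomial K (curveIdeal K a) (Finsupp.single i (c i)) := by
  classical
  rintro S ⟨hbin, hspan⟩
  obtain ⟨⟨hpos, u, hui, hdu⟩, -⟩ := hc i
  set w : Fin n →₀ ℕ := Finsupp.single i (c i) with hw
  have hunw : u ≠ w := by
    intro h
    have : u i = c i := by rw [h, hw]; simp
    omega
  have hf : (monomial w (1 : K) - monomial u (1 : K)) ∈ curveIdeal K a := by
    apply Ideal.subset_span
    exact ⟨w, u, by rw [hw, degN_single']; exact hdu, rfl⟩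
  have hfS : (monomial w (1 : K) - monomial u (1 : K)) ∈ Ideal.span S := by
    rw [hspan]; exact hf
  have hcoeff : coeff w (monomial w (1 : K) - monomial u (1 : K)) ≠ 0 := by
    rw [coeff_sub, coeff_monomial, coeff_monomial, if_pos rfl, if_neg hunw, sub_zero]
    exact one_ne_zero
  obtain ⟨g, hgS, u', hle, hsup⟩ := exists_gen_of_coeff_ne_zero K hfS w hcoeff
  obtain ⟨p, q, rfl⟩ := hbin g hgS
  have hpq : p ≠ q := by
    rintro rfl
    rw [sub_self] at hsup
    simp at hsup
  have hgI : (monomial p (1 : K) - monomial q (1 : K)) ∈ curveIdeal K a := by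
    rw [← hspan]; exact Ideal.subset_span hgS
  have hdeg := degN_eq_of_mem_curveIdeal K hgI
  have hcu' : coeff u' (monomial p (1 : K) - monomial q (1 : K)) ≠ 0 :=
    MvPolynomial.mem_support_iff.1 hsup
  rw [coeff_sub, coeff_monomial, coeff_monomial] at hcu'
  have hpor : u' = p ∨ u' = q := by
    by_contra hcon
    push_neg at hcon
    rw [if_neg (fun h => hcon.1 h.symm), if_neg (fun h => hcon.2 h.symm), sub_zero] at hcu'
    exact hcu' rfl
  refine ⟨monomial p (1 : K) - monomial q (1 : K), hgS, ?_⟩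
  rcases hpor with rfl | rfl
  · have heq : u' = Finsupp.single i (c i) := eq_single_of_le ha (hc i) hpq hdeg hle
    rw [hw, ← heq]; exact hsup
  · have heq : u' = Finsupp.single i (c i) :=
      eq_single_of_le ha (hc i) (Ne.symm hpq) hdeg.symm hle
    rw [hw, ← heq]; exact hsup
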